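/- For every positive integer k, regarding the count as a real number, ρ_{k,1}(4) = 4^{k−1} + 2^{3k/2 − 1} · sin(kπ/4). -/

import Mathlib

/-- `rho k lam n` is the number of `k`-tuples `(x₁,…,x_k) ∈ (ℤ/nℤ)^k` with
`x₁² + ⋯ + x_k² ≡ lam (mod n)`. -/
noncomputable def rho (k : ℕ) (lam : ℤ) (n : ℕ) : ℕ :=
  Nat.card {x : Fin k → ZMod n // ∑ i, x i ^ 2 = (lam : ZMod n)}

lemma rho_congr (k : ℕ) {l m : ℤ} (n : ℕ) (h : (l : ZMod n) = (m : ZMod n)) :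
    rho k l n = rho k m n := by
  unfold rho; rw [h]

lemma card_eq_rho (k : ℕ) (l : ℤ) (a : ZMod 4) (m : ℤ) (h : (l : ZMod 4) - a ^ 2 = (m : ZMod 4)) :
    Nat.card {y : Fin k → ZMod 4 // ∑ i, y i ^ 2 = (l : ZMod 4) - a ^ 2} = rho k m 4 := by
  rw [rho, h]

lemma rho_succ (k : ℕ) (l : ℤ) :
    rho (k + 1) l 4 = 2 * rho k l 4 + 2 * rho k (l - 1) 4 := by
  have e : {x : Fin (k+1) → ZMod 4 // ∑ i, x i ^ 2 = (l : ZMod 4)} ≃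
      Σ a : ZMod 4, {y : Fin k → ZMod 4 // ∑ i, y i ^ 2 = (l : ZMod 4) - a ^ 2} := by
    refine ⟨fun x => ⟨x.1 0, Fin.tail x.1, ?_⟩, fun p => ⟨Fin.cons p.1 p.2.1, ?_⟩, ?_, ?_⟩
    · have h := x.2
      rw [Fin.sum_univ_succ] at h
      exact eq_sub_of_add_eq' h
    · have h := p.2.2
      rw [Fin.sum_univ_succ]
      simp only [Fin.cons_zero, Fin.cons_succ]
      rw [h]
      ring
    · intro x
      ext i
      simp [Fin.cons_self_tail]
    · rintro ⟨a, y, hy⟩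
      simp [Fin.tail_cons]
      exact HEq.rfl
  have hc : rho (k+1) l 4 = ∑ a : ZMod 4,
      Nat.card {y : Fin k → ZMod 4 // ∑ i, y i ^ 2 = (l : ZMod 4) - a ^ 2} := by
    rw [rho, Nat.card_congr e, Nat.card_eq_fintype_card, Fintype.card_sigma]
    simp [Nat.card_eq_fintype_card]
  rw [hc, show (Finset.univ : Finset (ZMod 4)) = {0, 1, 2, 3} by decide]
  rw [Finset.sum_insert (by decide), Finset.sum_insert (by decide),
    Finset.sum_insert (by decide), Finset.sum_singleton]
  rw [card_eq_rho k l 0 l (by norm_num),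
      card_eq_rho k l 1 (l - 1) (by push_cast; ring),
      card_eq_rho k l 2 l (by norm_num; decide),
      card_eq_rho k l 3 (l - 1) (by push_cast; norm_num; decide)]
  ring

lemma rho_zero (l : ℤ) : rho 0 l 4 = if (l : ZMod 4) = 0 then 1 else 0 := by
  rw [rho]
  split_ifs with h
  · rw [Nat.card_eq_one_iff_unique]
    constructor
    · constructor
      rintro ⟨x, hx⟩ ⟨y, hy⟩
      ext i
      exact i.elim0
    · exact ⟨⟨fun i => i.elim0, by simpa using h.symm⟩⟩
  · rw [Nat.card_eq_zero]
    left
    rw [isEmpty_subtype]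
    intro x
    simpa using fun hh => h hh.symm

lemma rho_four_formula (k : ℕ) (hk : 1 ≤ k) :
    ((rho k 0 4 : ℝ) = 4 ^ (k-1) + 2 ^ (3*(k:ℝ)/2 - 1) * Real.cos (k * Real.pi / 4)) ∧
    ((rho k 1 4 : ℝ) = 4 ^ (k-1) + 2 ^ (3*(k:ℝ)/2 - 1) * Real.sin (k * Real.pi / 4)) ∧
    ((rho k 2 4 : ℝ) = 4 ^ (k-1) - 2 ^ (3*(k:ℝ)/2 - 1) * Real.cos (k * Real.pi / 4)) ∧
    ((rho k 3 4 : ℝ) = 4 ^ (k-1) - 2 ^ (3*(k:ℝ)/2 - 1) * Real.sin (k * Real.pi / 4)) := by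
  have hs2 : Real.sqrt 2 * Real.sqrt 2 = 2 := Real.mul_self_sqrt (by norm_num)
  induction k, hk using Nat.le_induction with
  | base =>
    have e0 : rho 1 0 4 = 2 := by
      rw [show (1:ℕ) = 0 + 1 from rfl, rho_succ, rho_zero, rho_zero]; decide
    have e1 : rho 1 1 4 = 2 := by
      rw [show (1:ℕ) = 0 + 1 from rfl, rho_succ, rho_zero, rho_zero]; decide
    have e2 : rho 1 2 4 = 0 := by
      rw [show (1:ℕ) = 0 + 1 from rfl, rho_succ, rho_zero, rho_zero]; decide
    have e3 : rho 1 3 4 = 0 := by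
      rw [show (1:ℕ) = 0 + 1 from rfl, rho_succ, rho_zero, rho_zero]; decide
    rw [e0, e1, e2, e3]
    have hB : ((2:ℝ) ^ (3*((1:ℕ):ℝ)/2 - 1)) = Real.sqrt 2 := by
      rw [show (3*((1:ℕ):ℝ)/2 - 1) = (1/2 : ℝ) by norm_num, ← Real.sqrt_eq_rpow]
    rw [hB, show ((1:ℕ):ℝ) * Real.pi / 4 = Real.pi / 4 by norm_num,
      Real.sin_pi_div_four, Real.cos_pi_div_four]
    refine ⟨?_, ?_, ?_, ?_⟩ <;> push_cast
    · linear_combination -hs2/2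
    · linear_combination -hs2/2
    · linear_combination hs2/2
    · linear_combination hs2/2
  | succ k hk ih =>
    obtain ⟨h0, h1, h2, h3⟩ := ih
    have hB : ((2:ℝ) ^ (3*((k:ℝ)+1)/2 - 1)) =
        (2:ℝ) ^ (3*(k:ℝ)/2 - 1) * (2 * Real.sqrt 2) := by
      rw [show (3*((k:ℝ)+1)/2 - 1) = (3*(k:ℝ)/2 - 1) + (1 + 1/2) by ring,
        Real.rpow_add (by norm_num : (0:ℝ) < 2), Real.rpow_add (by norm_num : (0:ℝ) < 2),
        Real.rpow_one, ← Real.sqrt_eq_rpow]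
    have hang : ((k:ℝ)+1) * Real.pi / 4 = (k:ℝ) * Real.pi / 4 + Real.pi / 4 := by ring
    have hsin : Real.sin (((k:ℝ)+1) * Real.pi / 4) =
        Real.sin ((k:ℝ) * Real.pi / 4) * (Real.sqrt 2 / 2) +
        Real.cos ((k:ℝ) * Real.pi / 4) * (Real.sqrt 2 / 2) := by
      rw [hang, Real.sin_add, Real.sin_pi_div_four, Real.cos_pi_div_four]
    have hcos : Real.cos (((k:ℝ)+1) * Real.pi / 4) =
        Real.cos ((k:ℝ) * Real.pi / 4) * (Real.sqrt 2 / 2) -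
        Real.sin ((k:ℝ) * Real.pi / 4) * (Real.sqrt 2 / 2) := by
      rw [hang, Real.cos_add, Real.sin_pi_div_four, Real.cos_pi_div_four]
    have h4 : ((4:ℝ) ^ k) = 4 * 4 ^ (k-1) := by
      conv_lhs => rw [show k = (k-1)+1 from (Nat.succ_pred_eq_of_pos hk).symm]
      rw [pow_succ]; ring
    have hm1 : rho k (0 - 1) 4 = rho k 3 4 := rho_congr k 4 (by decide)
    refine ⟨?_, ?_, ?_, ?_⟩
    · rw [rho_succ, hm1]
      push_cast
      rw [h0, h3, hB, hcos, h4]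
      linear_combination (-((2:ℝ) ^ (3*(k:ℝ)/2 - 1) *
        (Real.cos ((k:ℝ) * Real.pi / 4) - Real.sin ((k:ℝ) * Real.pi / 4)))) * hs2
    · rw [rho_succ, show (1 - 1 : ℤ) = 0 from rfl]
      push_cast
      rw [h0, h1, hB, hsin, h4]
      linear_combination (-((2:ℝ) ^ (3*(k:ℝ)/2 - 1) *
        (Real.sin ((k:ℝ) * Real.pi / 4) + Real.cos ((k:ℝ) * Real.pi / 4)))) * hs2
    · rw [rho_succ, show (2 - 1 : ℤ) = 1 from rfl]
      push_cast
      rw [h1, h2, hB, hcos, h4]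
      linear_combination ((2:ℝ) ^ (3*(k:ℝ)/2 - 1) *
        (Real.cos ((k:ℝ) * Real.pi / 4) - Real.sin ((k:ℝ) * Real.pi / 4))) * hs2
    · rw [rho_succ, show (3 - 1 : ℤ) = 2 from rfl]
      push_cast
      rw [h2, h3, hB, hsin, h4]
      linear_combination ((2:ℝ) ^ (3*(k:ℝ)/2 - 1) *
        (Real.sin ((k:ℝ) * Real.pi / 4) + Real.cos ((k:ℝ) * Real.pi / 4))) * hs2

/-- `ρ_{k,1}(4) = 4^{k−1} + 2^{3k/2 − 1} · sin(kπ/4)`. -/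
theorem rho_one_four (k : ℕ) (hk : 0 < k) :
    (rho k 1 4 : ℝ) =
      4 ^ (k - 1) + 2 ^ (3 * (k : ℝ) / 2 - 1) * Real.sin (k * Real.pi / 4) := by
  exact (rho_four_formula k hk).2.1
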